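/- Fix N ≥ 1 and let θ₁, …, θ_N be mutually independent real-valued random variables on a probability space, each uniformly distributed on [−π/2, π/2]. Define the random vector ṽ ∈ ℂ^{N+1} by ṽ_n = exp(−iθ_n) for n = 1, …, N and ṽ_{N+1} = 1. Then the entrywise expectation of the outer product ṽ ṽ^H equals the matrix Z; that is, for all m, n ∈ {1, …, N+1}, E[ṽ_m · conj(ṽ_n)] = Z_{m,n}. -/

import Mathlib

open MeasureTheory Real ProbabilityTheory

lemma indep_integral_mul_complex {Ω : Type*} [MeasurableSpace Ω] {μ : Measure Ω}
    {f g : Ω → ℂ} (h : IndepFun f g μ) (hf : Integrable f μ) (hg : Integrable g μ) :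
    ∫ ω, f ω * g ω ∂μ = (∫ ω, f ω ∂μ) * ∫ ω, g ω ∂μ := by
  have hfg : Integrable (fun ω => f ω * g ω) μ := h.integrable_mul hf hg
  have hrr : IndepFun (fun ω => (f ω).re) (fun ω => (g ω).re) μ :=
    h.comp Complex.measurable_re Complex.measurable_re
  have hri : IndepFun (fun ω => (f ω).re) (fun ω => (g ω).im) μ :=
    h.comp Complex.measurable_re Complex.measurable_im
  have hir : IndepFun (fun ω => (f ω).im) (fun ω => (g ω).re) μ :=
    h.comp Complex.measurable_im Complex.measurable_re
  have hii : IndepFun (fun ω => (f ω).im) (fun ω => (g ω).im) μ :=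
    h.comp Complex.measurable_im Complex.measurable_im
  have hfr : Integrable (fun ω => (f ω).re) μ := hf.re
  have hfi : Integrable (fun ω => (f ω).im) μ := hf.im
  have hgr : Integrable (fun ω => (g ω).re) μ := hg.re
  have hgi : Integrable (fun ω => (g ω).im) μ := hg.im
  rw [← integral_re_add_im hfg, ← integral_re_add_im hf, ← integral_re_add_im hg]
  simp only [RCLike.I, Pi.mul_apply, Complex.mul_re, Complex.mul_im, RCLike.re_to_complex,
    RCLike.im_to_complex]
  have i1 : Integrable (fun ω => (f ω).re * (g ω).re) μ := hrr.integrable_mul hfr hgr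
  have i2 : Integrable (fun ω => (f ω).im * (g ω).im) μ := hii.integrable_mul hfi hgi
  have i3 : Integrable (fun ω => (f ω).re * (g ω).im) μ := hri.integrable_mul hfr hgi
  have i4 : Integrable (fun ω => (f ω).im * (g ω).re) μ := hir.integrable_mul hfi hgr
  have e1 := hrr.integral_mul_eq_mul_integral hfr.aestronglyMeasurable hgr.aestronglyMeasurable
  have e2 := hii.integral_mul_eq_mul_integral hfi.aestronglyMeasurable hgi.aestronglyMeasurable
  have e3 := hri.integral_mul_eq_mul_integral hfr.aestronglyMeasurable hgi.aestronglyMeasurable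
  have e4 := hir.integral_mul_eq_mul_integral hfi.aestronglyMeasurable hgr.aestronglyMeasurable
  simp only [Pi.mul_def] at e1 e2 e3 e4
  rw [integral_sub i1 i2, integral_add i3 i4, e1, e2, e3, e4]
  push_cast
  ring_nf
  rw [Complex.I_sq]
  ring

lemma key_interval (c : ℂ) (hc : c ≠ 0)
    (h2 : Complex.exp (c * ((π/2 : ℝ) : ℂ)) - Complex.exp (c * ((-(π/2) : ℝ) : ℂ)) = 2 * c) :
    ∫ x in (-(π/2) : ℝ)..(π/2), Complex.exp (c * x) = 2 := by
  rw [integral_exp_mul_complex hc, h2, mul_div_assoc, div_self hc, mul_one]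

lemma integral_exp_theta {Ω : Type*} [MeasurableSpace Ω] (μ : Measure Ω) [IsProbabilityMeasure μ]
    (X : Ω → ℝ) (hX : Measurable X)
    (hlaw : Measure.map X μ = ENNReal.ofReal (1 / π) • volume.restrict (Set.Icc (-(π / 2)) (π / 2)))
    (c : ℂ) (hint : ∫ x in (-(π/2) : ℝ)..(π/2), Complex.exp (c * x) = 2) :
    ∫ ω, Complex.exp (c * X ω) ∂μ = ((2 / π : ℝ) : ℂ) := by
  have hcont : Continuous fun x : ℝ => Complex.exp (c * x) :=
    Complex.continuous_exp.comp (continuous_const.mul Complex.continuous_ofReal)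
  rw [← integral_map (μ := μ) hX.aemeasurable hcont.aestronglyMeasurable, hlaw,
    integral_smul_measure]
  have hle : (-(π/2) : ℝ) ≤ π/2 := by linarith [pi_pos]
  rw [MeasureTheory.integral_Icc_eq_integral_Ioc, ← intervalIntegral.integral_of_le hle, hint]
  have : (ENNReal.ofReal (1/π)).toReal = 1/π := ENNReal.toReal_ofReal (by positivity)
  rw [this]
  push_cast
  rw [Complex.real_smul]
  push_cast
  field_simp

lemma exp_I_pi_div_two : Complex.exp (Complex.I * ((π/2 : ℝ) : ℂ)) = Complex.I := by
  rw [mul_comm, Complex.exp_mul_I, ← Complex.ofReal_cos, ← Complex.ofReal_sin]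
  simp

lemma exp_I_neg_pi_div_two : Complex.exp (Complex.I * ((-(π/2) : ℝ) : ℂ)) = -Complex.I := by
  rw [mul_comm, Complex.exp_mul_I, ← Complex.ofReal_cos, ← Complex.ofReal_sin]
  simp

lemma exp_negI_pi_div_two : Complex.exp (-Complex.I * ((π/2 : ℝ) : ℂ)) = -Complex.I := by
  rw [neg_mul, ← mul_neg, ← Complex.ofReal_neg, mul_comm, Complex.exp_mul_I,
    ← Complex.ofReal_cos, ← Complex.ofReal_sin]
  simp

lemma exp_negI_neg_pi_div_two : Complex.exp (-Complex.I * ((-(π/2) : ℝ) : ℂ)) = Complex.I := by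
  rw [neg_mul, ← mul_neg, ← Complex.ofReal_neg, mul_comm, Complex.exp_mul_I,
    ← Complex.ofReal_cos, ← Complex.ofReal_sin]
  simp

lemma integrable_exp_mul_I {Ω : Type*} [MeasurableSpace Ω] (μ : Measure Ω)
    [IsProbabilityMeasure μ] (X : Ω → ℝ) (hX : Measurable X) (c : ℂ) (hre : c.re = 0) :
    Integrable (fun ω => Complex.exp (c * X ω)) μ := by
  have hmeas : Measurable fun ω => Complex.exp (c * X ω) :=
    Complex.measurable_exp.comp (measurable_const.mul (Complex.measurable_ofReal.comp hX))
  refine Integrable.mono' (integrable_const 1) hmeas.aestronglyMeasurable ?_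
  filter_upwards with ω
  simp [Complex.norm_exp, Complex.mul_re, hre]

/-- Theorem 1 (core identity): if `θ₁, …, θ_N` are i.i.d. uniform on `[-π/2, π/2]`
and `ṽ ∈ ℂ^{N+1}` is given by `ṽ_n = exp(-i θ_n)` for `n ≤ N`, `ṽ_{N+1} = 1`,
then `E[ṽ ṽᴴ] = Z` entrywise. -/
theorem expectation_outer_product_eq_Z {Ω : Type*} [MeasurableSpace Ω]
    {μ : Measure Ω} [IsProbabilityMeasure μ]
    (N : ℕ) (hN : 1 ≤ N)
    (θ : Fin N → Ω → ℝ) (hθ : ∀ n, Measurable (θ n))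
    (hindep : iIndepFun (m := fun _ => Real.measurableSpace) θ μ)
    (hlaw : ∀ n, Measure.map (θ n) μ
      = ENNReal.ofReal (1 / π) • volume.restrict (Set.Icc (-(π / 2)) (π / 2)))
    (vt : Ω → Fin (N + 1) → ℂ)
    (hvt : ∀ ω (n : Fin (N + 1)), vt ω n
      = if h : (n : ℕ) < N then Complex.exp (-(Complex.I * (θ ⟨n, h⟩ ω : ℂ))) else 1)
    (Z : Matrix (Fin (N + 1)) (Fin (N + 1)) ℂ)
    (hZ : ∀ m n, Z m n = if m = n then 1
      else if (m : ℕ) < N ∧ (n : ℕ) < N then ((4 / π ^ 2 : ℝ) : ℂ) else ((2 / π : ℝ) : ℂ)) :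
    ∀ m n : Fin (N + 1),
      (∫ ω, vt ω m * (starRingEnd ℂ) (vt ω n) ∂μ) = Z m n := by
  have hneg : ∀ k : Fin N, ∫ ω, Complex.exp (-Complex.I * θ k ω) ∂μ = ((2 / π : ℝ) : ℂ) := by
    intro k
    refine integral_exp_theta μ _ (hθ k) (hlaw k) _ (key_interval _ (by simp) ?_)
    rw [exp_negI_pi_div_two, exp_negI_neg_pi_div_two]; ring
  have hpos : ∀ k : Fin N, ∫ ω, Complex.exp (Complex.I * θ k ω) ∂μ = ((2 / π : ℝ) : ℂ) := by
    intro k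
    refine integral_exp_theta μ _ (hθ k) (hlaw k) _ (key_interval _ Complex.I_ne_zero ?_)
    rw [exp_I_pi_div_two, exp_I_neg_pi_div_two]; ring
  have hintneg : ∀ k : Fin N, Integrable (fun ω => Complex.exp (-Complex.I * θ k ω)) μ :=
    fun k => integrable_exp_mul_I μ _ (hθ k) _ (by simp)
  have hintpos : ∀ k : Fin N, Integrable (fun ω => Complex.exp (Complex.I * θ k ω)) μ :=
    fun k => integrable_exp_mul_I μ _ (hθ k) _ (by simp)
  intro m n
  by_cases hmn : m = n
  · subst hmn
    rw [hZ, if_pos rfl]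
    have hone : ∀ ω, vt ω m * (starRingEnd ℂ) (vt ω m) = 1 := by
      intro ω
      rw [hvt]
      split
      · rw [← Complex.exp_conj, ← Complex.exp_add]
        simp
      · simp
    simp [hone]
  · rw [hZ, if_neg hmn]
    rcases lt_or_ge (m : ℕ) N with hm | hm <;> rcases lt_or_ge (n : ℕ) N with hn | hn
    · rw [if_pos ⟨hm, hn⟩]
      have heq : ∀ ω, vt ω m * (starRingEnd ℂ) (vt ω n)
          = Complex.exp (-Complex.I * θ ⟨m, hm⟩ ω) * Complex.exp (Complex.I * θ ⟨n, hn⟩ ω) := by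
        intro ω
        rw [hvt, hvt, dif_pos hm, dif_pos hn, ← Complex.exp_conj]
        simp [neg_mul]
      simp only [heq]
      have hne : (⟨(m : ℕ), hm⟩ : Fin N) ≠ ⟨(n : ℕ), hn⟩ := by
        simp only [ne_eq, Fin.mk.injEq]
        exact fun h => hmn (Fin.ext h)
      have hind : IndepFun (fun ω => Complex.exp (-Complex.I * θ ⟨m, hm⟩ ω))
          (fun ω => Complex.exp (Complex.I * θ ⟨n, hn⟩ ω)) μ := by
        refine (hindep.indepFun hne).comp
          (Complex.measurable_exp.comp (measurable_const.mul Complex.measurable_ofReal))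
          (Complex.measurable_exp.comp (measurable_const.mul Complex.measurable_ofReal))
      rw [indep_integral_mul_complex hind (hintneg _) (hintpos _), hneg, hpos]
      push_cast
      ring
    · rw [if_neg (by omega)]
      have heq : ∀ ω, vt ω m * (starRingEnd ℂ) (vt ω n)
          = Complex.exp (-Complex.I * θ ⟨m, hm⟩ ω) := by
        intro ω
        rw [hvt, hvt, dif_pos hm, dif_neg (by omega)]
        simp [neg_mul]
      simp only [heq]
      exact hneg _
    · rw [if_neg (by omega)]
      have heq : ∀ ω, vt ω m * (starRingEnd ℂ) (vt ω n)
          = Complex.exp (Complex.I * θ ⟨n, hn⟩ ω) := by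
        intro ω
        rw [hvt, hvt, dif_neg (by omega), dif_pos hn, ← Complex.exp_conj]
        simp [neg_mul]
      simp only [heq]
      exact hpos _
    · exact absurd (Fin.ext (by omega : (m : ℕ) = (n : ℕ))) hmn
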